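/- Rigal–Gaches formula: let A ∈ ℂ^{N×N}, d ∈ ℂ^N with d ≠ 0, and ũ ∈ ℂ^N with ũ ≠ 0. Then the minimum of ‖( ‖ΔA‖_F/‖A‖_F, ‖Δd‖₂/‖d‖₂ )‖₂ over all ΔA ∈ ℂ^{N×N}, Δd ∈ ℂ^N satisfying (A + ΔA)ũ = d + Δd equals ‖d − Aũ‖₂ / √(‖A‖_F² ‖ũ‖₂² + ‖d‖₂²). -/

import Mathlib

open Matrix Finset

set_option maxHeartbeats 1000000

private lemma sum_norm_sq_pos' {N : ℕ} {f : Fin N → ℂ} (hf : f ≠ 0) :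
    0 < ∑ i, ‖f i‖ ^ 2 := by
  obtain ⟨i, hi⟩ := Function.ne_iff.1 hf
  exact Finset.sum_pos' (fun j _ => by positivity)
    ⟨i, Finset.mem_univ i, pow_pos (norm_pos_iff.2 hi) 2⟩

private lemma matrix_sum_sq_pos {N : ℕ} {A : Matrix (Fin N) (Fin N) ℂ} (hA : A ≠ 0) :
    0 < ∑ i, ∑ j, ‖A i j‖ ^ 2 := by
  obtain ⟨i, hi⟩ := Function.ne_iff.1 hA
  refine Finset.sum_pos' (fun k _ => Finset.sum_nonneg fun j _ => by positivity)
    ⟨i, Finset.mem_univ i, sum_norm_sq_pos' hi⟩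

/-- Rigal–Gaches formula: the normwise backward error
`min ‖(‖ΔA‖_F/‖A‖_F, ‖Δd‖₂/‖d‖₂)‖₂` over all `ΔA, Δd` with `(A + ΔA) ũ = d + Δd`
equals `‖d − A ũ‖₂ / √(‖A‖_F² ‖ũ‖₂² + ‖d‖₂²)`. -/
theorem rigal_gaches_backward_error (N : ℕ) (A : Matrix (Fin N) (Fin N) ℂ)
    (hA : A ≠ 0) (d u : Fin N → ℂ) (hd : d ≠ 0) (hu : u ≠ 0) :
    IsLeast
      { v : ℝ | ∃ (dA : Matrix (Fin N) (Fin N) ℂ) (dd : Fin N → ℂ),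
          (A + dA).mulVec u = d + dd ∧
          v = Real.sqrt
            ((Real.sqrt (∑ i, ∑ j, ‖dA i j‖ ^ 2) /
                Real.sqrt (∑ i, ∑ j, ‖A i j‖ ^ 2)) ^ 2 +
              (Real.sqrt (∑ i, ‖dd i‖ ^ 2) / Real.sqrt (∑ i, ‖d i‖ ^ 2)) ^ 2) }
      (Real.sqrt (∑ i, ‖(d - A.mulVec u) i‖ ^ 2) /
        Real.sqrt ((∑ i, ∑ j, ‖A i j‖ ^ 2) * (∑ i, ‖u i‖ ^ 2) + ∑ i, ‖d i‖ ^ 2)) := by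
  set r : Fin N → ℂ := d - A.mulVec u with hrdef
  set α2 : ℝ := ∑ i, ∑ j, ‖A i j‖ ^ 2 with hα2def
  set μ2 : ℝ := ∑ i, ‖u i‖ ^ 2 with hμ2def
  set δ2 : ℝ := ∑ i, ‖d i‖ ^ 2 with hδ2def
  set ρ2 : ℝ := ∑ i, ‖r i‖ ^ 2 with hρ2def
  set s : ℝ := α2 * μ2 + δ2 with hsdef
  have hα2 : 0 < α2 := matrix_sum_sq_pos hA
  have hμ2 : 0 < μ2 := sum_norm_sq_pos' hu
  have hδ2 : 0 < δ2 := sum_norm_sq_pos' hd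
  have hρ2 : 0 ≤ ρ2 := Finset.sum_nonneg fun i _ => pow_nonneg (norm_nonneg _) 2
  have hs : 0 < s := add_pos (mul_pos hα2 hμ2) hδ2
  have hsC : (α2 : ℂ) * μ2 + δ2 = (s : ℝ) := by rw [hsdef]; push_cast; ring
  have hsne : (s : ℂ) ≠ 0 := by exact_mod_cast hs.ne'
  constructor
  · -- membership: the optimal perturbation
    refine ⟨Matrix.of fun i j => ((α2 / s : ℝ) : ℂ) * r i * (starRingEnd ℂ) (u j),
      fun i => -(((δ2 / s : ℝ) : ℂ) * r i), ?_, ?_⟩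
    · funext i
      have hμC : ∑ j, (starRingEnd ℂ) (u j) * u j = ((μ2 : ℝ) : ℂ) := by
        rw [hμ2def]; push_cast
        exact Finset.sum_congr rfl fun j _ => by
          rw [mul_comm, Complex.mul_conj']
      have h1 : (Matrix.of fun i j => ((α2 / s : ℝ) : ℂ) * r i *
          (starRingEnd ℂ) (u j)).mulVec u i = ((α2 / s : ℝ) : ℂ) * r i * ((μ2 : ℝ) : ℂ) := by
        simp only [mulVec, dotProduct, Matrix.of_apply]
        rw [← hμC, Finset.mul_sum]
        exact Finset.sum_congr rfl fun j _ => by ring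
      simp only [add_mulVec, Pi.add_apply, h1]
      have hri : r i = d i - A.mulVec u i := by rw [hrdef]; rfl
      rw [hri]
      push_cast
      field_simp
      linear_combination (d i - A.mulVec u i) * hsC
    · have hc : 0 ≤ α2 / s := div_nonneg hα2.le hs.le
      have hc2 : 0 ≤ δ2 / s := div_nonneg hδ2.le hs.le
      have hdA : ∑ i, ∑ j, ‖(Matrix.of fun i j => ((α2 / s : ℝ) : ℂ) * r i *
          (starRingEnd ℂ) (u j)) i j‖ ^ 2 = (α2 / s) ^ 2 * ρ2 * μ2 := by
        have : ∀ i j, ‖(Matrix.of fun i j => ((α2 / s : ℝ) : ℂ) * r i *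
            (starRingEnd ℂ) (u j)) i j‖ ^ 2 = ((α2 / s) ^ 2 * ‖r i‖ ^ 2) * ‖u j‖ ^ 2 := by
          intro i j
          simp only [Matrix.of_apply, norm_mul, Complex.norm_real, Real.norm_eq_abs,
            RCLike.norm_conj, abs_of_nonneg hc, mul_pow]
        simp_rw [this, ← Finset.mul_sum, ← hμ2def, ← Finset.sum_mul, ← Finset.mul_sum]
        rfl
      have hdd : ∑ i, ‖-(((δ2 / s : ℝ) : ℂ) * r i)‖ ^ 2 = (δ2 / s) ^ 2 * ρ2 := by
        have : ∀ i, ‖-(((δ2 / s : ℝ) : ℂ) * r i)‖ ^ 2 = (δ2 / s) ^ 2 * ‖r i‖ ^ 2 := by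
          intro i
          simp only [norm_neg, norm_mul, Complex.norm_real, Real.norm_eq_abs,
            abs_of_nonneg hc2, mul_pow]
        simp_rw [this, ← Finset.mul_sum]
        rfl
      rw [hdA, hdd]
      rw [show ((α2/s)^2 * ρ2 * μ2 : ℝ) = ((α2/s) * Real.sqrt ρ2 * Real.sqrt μ2)^2 by
          rw [mul_pow, mul_pow, Real.sq_sqrt hρ2, Real.sq_sqrt hμ2.le],
        show ((δ2/s)^2 * ρ2 : ℝ) = ((δ2/s) * Real.sqrt ρ2)^2 by
          rw [mul_pow, Real.sq_sqrt hρ2],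
        Real.sqrt_sq (mul_nonneg (mul_nonneg hc (Real.sqrt_nonneg _)) (Real.sqrt_nonneg _)),
        Real.sqrt_sq (mul_nonneg hc2 (Real.sqrt_nonneg _))]
      have hin : ((α2/s) * Real.sqrt ρ2 * Real.sqrt μ2 / Real.sqrt α2) ^ 2 +
          ((δ2/s) * Real.sqrt ρ2 / Real.sqrt δ2) ^ 2 = ρ2 / s := by
        have e1 : Real.sqrt α2 ^ 2 = α2 := Real.sq_sqrt hα2.le
        have e2 : Real.sqrt δ2 ^ 2 = δ2 := Real.sq_sqrt hδ2.le
        have e3 : Real.sqrt ρ2 ^ 2 = ρ2 := Real.sq_sqrt hρ2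
        have e4 : Real.sqrt μ2 ^ 2 = μ2 := Real.sq_sqrt hμ2.le
        have h1 : Real.sqrt α2 ≠ 0 := (Real.sqrt_pos.2 hα2).ne'
        have h2 : Real.sqrt δ2 ≠ 0 := (Real.sqrt_pos.2 hδ2).ne'
        have h5 : (0:ℝ) < α2 * μ2 + δ2 := by nlinarith
        rw [hsdef]
        simp only [div_pow, mul_pow, e1, e2, e3, e4]
        field_simp
      rw [hin, Real.sqrt_div hρ2]
  · -- lower bound
    rintro v ⟨dA, dd, hcon, rfl⟩
    set P2 : ℝ := ∑ i, ∑ j, ‖dA i j‖ ^ 2 with hP2def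
    set D2 : ℝ := ∑ i, ‖dd i‖ ^ 2 with hD2def
    have hP2 : 0 ≤ P2 := Finset.sum_nonneg fun i _ => Finset.sum_nonneg fun j _ => by positivity
    have hD2 : 0 ≤ D2 := Finset.sum_nonneg fun i _ => by positivity
    -- r = dA.mulVec u - dd
    have hr : r = dA.mulVec u - dd := by
      funext i
      have := congrFun hcon i
      simp only [add_mulVec, Pi.add_apply] at this
      simp only [hrdef, Pi.sub_apply]
      linear_combination -this
    -- triangle: √ρ2 ≤ √(∑‖(dA.mulVec u) i‖²) + √D2
    have htri : Real.sqrt ρ2 ≤ Real.sqrt (∑ i, ‖dA.mulVec u i‖ ^ 2) + Real.sqrt D2 := by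
      have e := norm_sub_le ((WithLp.equiv 2 (Fin N → ℂ)).symm (dA.mulVec u))
        ((WithLp.equiv 2 (Fin N → ℂ)).symm dd)
      have h1 : ‖(WithLp.equiv 2 (Fin N → ℂ)).symm (dA.mulVec u) -
          (WithLp.equiv 2 (Fin N → ℂ)).symm dd‖ = Real.sqrt ρ2 := by
        rw [show (WithLp.equiv 2 (Fin N → ℂ)).symm (dA.mulVec u) -
            (WithLp.equiv 2 (Fin N → ℂ)).symm dd =
            (WithLp.equiv 2 (Fin N → ℂ)).symm (dA.mulVec u - dd) from rfl, ← hr]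
        rw [EuclideanSpace.norm_eq]; rfl
      have h2 : ‖(WithLp.equiv 2 (Fin N → ℂ)).symm (dA.mulVec u)‖ =
          Real.sqrt (∑ i, ‖dA.mulVec u i‖ ^ 2) := by rw [EuclideanSpace.norm_eq]; rfl
      have h3 : ‖(WithLp.equiv 2 (Fin N → ℂ)).symm dd‖ = Real.sqrt D2 := by
        rw [EuclideanSpace.norm_eq]; rfl
      rw [h1, h2, h3] at e; exact e
    -- matrix-vector bound
    have hmv : Real.sqrt (∑ i, ‖dA.mulVec u i‖ ^ 2) ≤ Real.sqrt P2 * Real.sqrt μ2 := by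
      rw [← Real.sqrt_mul hP2]
      apply Real.sqrt_le_sqrt
      rw [hP2def, Finset.sum_mul]
      apply Finset.sum_le_sum
      intro i _
      have hrow : ‖dA.mulVec u i‖ ≤ Real.sqrt (∑ j, ‖dA i j‖ ^ 2) * Real.sqrt μ2 := by
        calc ‖dA.mulVec u i‖ ≤ ∑ j, ‖dA i j‖ * ‖u j‖ := by
              simp only [mulVec, dotProduct]
              exact (norm_sum_le _ _).trans (le_of_eq (Finset.sum_congr rfl
                fun j _ => norm_mul _ _))
          _ ≤ _ := Real.sum_mul_le_sqrt_mul_sqrt _ _ _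
      calc ‖dA.mulVec u i‖ ^ 2 ≤ (Real.sqrt (∑ j, ‖dA i j‖ ^ 2) * Real.sqrt μ2) ^ 2 := by
            apply pow_le_pow_left₀ (norm_nonneg _) hrow
        _ = (∑ j, ‖dA i j‖ ^ 2) * μ2 := by
            rw [mul_pow, Real.sq_sqrt (Finset.sum_nonneg fun j _ => by positivity),
              Real.sq_sqrt hμ2.le]
    set x : ℝ := Real.sqrt P2 / Real.sqrt α2 with hxdef
    set y : ℝ := Real.sqrt D2 / Real.sqrt δ2 with hydef
    have hx : 0 ≤ x := div_nonneg (Real.sqrt_nonneg _) (Real.sqrt_nonneg _)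
    have hy : 0 ≤ y := div_nonneg (Real.sqrt_nonneg _) (Real.sqrt_nonneg _)
    have hsqα : Real.sqrt P2 = x * Real.sqrt α2 := by
      rw [hxdef, div_mul_cancel₀ _ (Real.sqrt_pos.2 hα2).ne']
    have hsqδ : Real.sqrt D2 = y * Real.sqrt δ2 := by
      rw [hydef, div_mul_cancel₀ _ (Real.sqrt_pos.2 hδ2).ne']
    have hchain : Real.sqrt ρ2 ≤ x * Real.sqrt α2 * Real.sqrt μ2 + y * Real.sqrt δ2 := by
      calc Real.sqrt ρ2 ≤ Real.sqrt (∑ i, ‖dA.mulVec u i‖ ^ 2) + Real.sqrt D2 := htri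
        _ ≤ Real.sqrt P2 * Real.sqrt μ2 + Real.sqrt D2 := by linarith
        _ = x * Real.sqrt α2 * Real.sqrt μ2 + y * Real.sqrt δ2 := by rw [hsqα, hsqδ]
    have hkey : ρ2 ≤ (x ^ 2 + y ^ 2) * s := by
      have e1 : Real.sqrt α2 ^ 2 = α2 := Real.sq_sqrt hα2.le
      have e2 : Real.sqrt δ2 ^ 2 = δ2 := Real.sq_sqrt hδ2.le
      have e3 : Real.sqrt μ2 ^ 2 = μ2 := Real.sq_sqrt hμ2.le
      have e4 : Real.sqrt ρ2 ^ 2 = ρ2 := Real.sq_sqrt hρ2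
      have h0 : 0 ≤ x * Real.sqrt α2 * Real.sqrt μ2 + y * Real.sqrt δ2 :=
        add_nonneg (mul_nonneg (mul_nonneg hx (Real.sqrt_nonneg _)) (Real.sqrt_nonneg _))
          (mul_nonneg hy (Real.sqrt_nonneg _))
      have hsq : ρ2 ≤ (x * Real.sqrt α2 * Real.sqrt μ2 + y * Real.sqrt δ2) ^ 2 := by
        rw [← e4]; exact pow_le_pow_left₀ (Real.sqrt_nonneg _) hchain 2
      have hX2 : (x * Real.sqrt α2 * Real.sqrt μ2 + y * Real.sqrt δ2) ^ 2 =
          x^2 * α2 * μ2 + 2*x*y*Real.sqrt α2*Real.sqrt μ2*Real.sqrt δ2 + y^2 * δ2 := by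
        linear_combination x^2 * Real.sqrt μ2 ^ 2 * e1 + x^2 * α2 * e3 + y^2 * e2
      have cross : 2*x*y*Real.sqrt α2*Real.sqrt μ2*Real.sqrt δ2 ≤
          x^2 * δ2 + y^2 * (α2 * μ2) := by
        have h := two_mul_le_add_sq (x * Real.sqrt δ2) (y * (Real.sqrt α2 * Real.sqrt μ2))
        calc 2*x*y*Real.sqrt α2*Real.sqrt μ2*Real.sqrt δ2
            = 2*(x*Real.sqrt δ2)*(y*(Real.sqrt α2*Real.sqrt μ2)) := by ring
          _ ≤ (x*Real.sqrt δ2)^2 + (y*(Real.sqrt α2*Real.sqrt μ2))^2 := h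
          _ = x^2 * δ2 + y^2 * (α2 * μ2) := by
              linear_combination x^2 * e2 + y^2 * Real.sqrt μ2 ^ 2 * e1 + y^2 * α2 * e3
      rw [hsdef]
      nlinarith [hsq, hX2, cross]
    rw [div_le_iff₀ (Real.sqrt_pos.2 hs), ← Real.sqrt_mul (add_nonneg (sq_nonneg x) (sq_nonneg y))]
    exact Real.sqrt_le_sqrt hkey
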